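/- For every complex number c there exists an infinite set S of invertible 4×4 complex matrices such that every M ∈ S satisfies tr(Mᵀ · M⁻¹) = c, and no two distinct elements of S are congruent to each other. -/

import Mathlib

open Matrix

/-- Matrix congruence: `A ≡_c B` iff `A = Pᵀ * B * P` for some invertible `P`. -/
def MatrixCongruent {n : ℕ} (A B : Matrix (Fin n) (Fin n) ℂ) : Prop :=
  ∃ P : Matrix (Fin n) (Fin n) ℂ, IsUnit P ∧ A = Pᵀ * B * P

namespace NoncongrAux

noncomputable def Mb (b d : ℂ) : Matrix (Fin 4) (Fin 4) ℂ :=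
  !![1, b, 0, 0; 1, 1, 0, 0; 0, 0, 1, d; 0, 0, 1, 1]

noncomputable def Nb (b d : ℂ) : Matrix (Fin 4) (Fin 4) ℂ :=
  !![1/(1-b), b/(b-1), 0, 0; 1/(b-1), 1/(1-b), 0, 0;
     0, 0, 1/(1-d), d/(d-1); 0, 0, 1/(d-1), 1/(1-d)]

lemma Mb_mul_Nb (b d : ℂ) (hb : b ≠ 1) (hd : d ≠ 1) : Mb b d * Nb b d = 1 := by
  have hb1 : b - 1 ≠ 0 := sub_ne_zero.mpr hb
  have hb2 : 1 - b ≠ 0 := sub_ne_zero.mpr (Ne.symm hb)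
  have hd1 : d - 1 ≠ 0 := sub_ne_zero.mpr hd
  have hd2 : 1 - d ≠ 0 := sub_ne_zero.mpr (Ne.symm hd)
  ext i j
  fin_cases i <;> fin_cases j <;>
    (simp [Mb, Nb, Matrix.mul_apply, Fin.sum_univ_four, Matrix.one_apply,
      Matrix.vecHead, Matrix.vecTail]) <;>
    (try field_simp) <;> ring

lemma isUnit_Mb (b d : ℂ) (hb : b ≠ 1) (hd : d ≠ 1) : IsUnit (Mb b d) :=
  ⟨⟨Mb b d, Nb b d, Mb_mul_Nb b d hb hd, mul_eq_one_comm.mp (Mb_mul_Nb b d hb hd)⟩, rfl⟩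

lemma inv_Mb (b d : ℂ) (hb : b ≠ 1) (hd : d ≠ 1) : (Mb b d)⁻¹ = Nb b d :=
  Matrix.inv_eq_right_inv (Mb_mul_Nb b d hb hd)

lemma cosquare_Mb (b d : ℂ) (hb : b ≠ 1) (hd : d ≠ 1) :
    (Mb b d)ᵀ * (Mb b d)⁻¹ = !![0, 1, 0, 0; -1, 1+b, 0, 0; 0, 0, 0, 1; 0, 0, -1, 1+d] := by
  rw [inv_Mb b d hb hd]
  have hb1 : b - 1 ≠ 0 := sub_ne_zero.mpr hb
  have hb2 : 1 - b ≠ 0 := sub_ne_zero.mpr (Ne.symm hb)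
  have hd1 : d - 1 ≠ 0 := sub_ne_zero.mpr hd
  have hd2 : 1 - d ≠ 0 := sub_ne_zero.mpr (Ne.symm hd)
  ext i j
  fin_cases i <;> fin_cases j <;>
    (simp [Mb, Nb, Matrix.transpose_apply, Matrix.mul_apply, Fin.sum_univ_four,
      Matrix.vecHead, Matrix.vecTail]) <;>
    (try field_simp) <;> ring

lemma trace_cosquare (b d : ℂ) (hb : b ≠ 1) (hd : d ≠ 1) :
    ((Mb b d)ᵀ * (Mb b d)⁻¹).trace = (1 + b) + (1 + d) := by
  rw [cosquare_Mb b d hb hd]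
  simp [Matrix.trace, Matrix.diag, Fin.sum_univ_four]

lemma trace_sq_cosquare (b d : ℂ) (hb : b ≠ 1) (hd : d ≠ 1) :
    (((Mb b d)ᵀ * (Mb b d)⁻¹) * ((Mb b d)ᵀ * (Mb b d)⁻¹)).trace
      = (1 + b) ^ 2 + (1 + d) ^ 2 - 4 := by
  rw [cosquare_Mb b d hb hd]
  simp [Matrix.trace, Matrix.diag, Matrix.mul_apply, Fin.sum_univ_four]
  ring

/-- `tr((AᵀA⁻¹)²)` is a congruence invariant (for `B` invertible). -/
lemma trace_sq_congr {A B : Matrix (Fin 4) (Fin 4) ℂ}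
    (h : MatrixCongruent A B) :
    ((Aᵀ * A⁻¹) * (Aᵀ * A⁻¹)).trace = ((Bᵀ * B⁻¹) * (Bᵀ * B⁻¹)).trace := by
  obtain ⟨P, hP, rfl⟩ := h
  have hPdet : IsUnit P.det := (Matrix.isUnit_iff_isUnit_det P).mp hP
  have hPtdet : IsUnit (Pᵀ).det := by rwa [Matrix.det_transpose]
  have hPP : P * P⁻¹ = 1 := Matrix.mul_nonsing_inv P hPdet
  have hPtPt : (Pᵀ)⁻¹ * Pᵀ = 1 := Matrix.nonsing_inv_mul Pᵀ hPtdet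
  have h1 : (Pᵀ * B * P)ᵀ = Pᵀ * Bᵀ * P := by
    simp [Matrix.transpose_mul, Matrix.mul_assoc]
  have h2 : (Pᵀ * B * P)⁻¹ = P⁻¹ * B⁻¹ * (Pᵀ)⁻¹ := by
    rw [Matrix.mul_inv_rev, Matrix.mul_inv_rev, Matrix.mul_assoc]
  have key : (Pᵀ * B * P)ᵀ * (Pᵀ * B * P)⁻¹ = Pᵀ * (Bᵀ * B⁻¹) * (Pᵀ)⁻¹ := by
    rw [h1, h2]
    calc Pᵀ * Bᵀ * P * (P⁻¹ * B⁻¹ * (Pᵀ)⁻¹)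
        = Pᵀ * Bᵀ * (P * P⁻¹) * B⁻¹ * (Pᵀ)⁻¹ := by
          simp only [Matrix.mul_assoc]
      _ = Pᵀ * (Bᵀ * B⁻¹) * (Pᵀ)⁻¹ := by
          rw [hPP]; simp only [Matrix.mul_one, Matrix.mul_assoc]
  rw [key]
  have key2 : Pᵀ * (Bᵀ * B⁻¹) * (Pᵀ)⁻¹ * (Pᵀ * (Bᵀ * B⁻¹) * (Pᵀ)⁻¹)
      = Pᵀ * ((Bᵀ * B⁻¹) * (Bᵀ * B⁻¹)) * (Pᵀ)⁻¹ := by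
    calc Pᵀ * (Bᵀ * B⁻¹) * (Pᵀ)⁻¹ * (Pᵀ * (Bᵀ * B⁻¹) * (Pᵀ)⁻¹)
        = Pᵀ * (Bᵀ * B⁻¹) * ((Pᵀ)⁻¹ * Pᵀ) * (Bᵀ * B⁻¹) * (Pᵀ)⁻¹ := by
          simp only [Matrix.mul_assoc]
      _ = Pᵀ * ((Bᵀ * B⁻¹) * (Bᵀ * B⁻¹)) * (Pᵀ)⁻¹ := by
          rw [hPtPt]; simp only [Matrix.mul_one, Matrix.mul_assoc]
  rw [key2, Matrix.mul_assoc, Matrix.trace_mul_comm, Matrix.mul_assoc, hPtPt,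
    Matrix.mul_one]

end NoncongrAux

open NoncongrAux in
/-- For every `c : ℂ` there are infinitely many pairwise non-congruent invertible `4×4`
complex matrices `M` with `tr(Mᵀ * M⁻¹) = c`. -/
theorem exists_infinite_noncongruent_solutions (c : ℂ) :
    ∃ S : Set (Matrix (Fin 4) (Fin 4) ℂ), S.Infinite ∧
      (∀ M ∈ S, IsUnit M ∧ (Mᵀ * M⁻¹).trace = c) ∧
      (∀ M ∈ S, ∀ N ∈ S, M ≠ N → ¬ MatrixCongruent M N) := by
  -- parameter set
  set f : ℕ → ℂ := fun n => c / 2 + n with hf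
  have hfinj : Function.Injective f := by
    intro n m h
    have : (n : ℂ) = m := by
      have := h
      simp only [hf] at this
      linear_combination this
    exact_mod_cast this
  set Bset : Set ℂ := (Set.range f) \ {1, c - 3} with hBset
  have hBinf : Bset.Infinite :=
    (Set.infinite_range_of_injective hfinj).diff
      ((Set.finite_singleton (c - 3)).insert 1)
  set g : ℂ → Matrix (Fin 4) (Fin 4) ℂ := fun b => Mb b (c - 2 - b) with hg
  have hginj : Function.Injective g := by
    intro b b' h
    have := congrArg (fun M => M 0 1) h
    simpa [hg, Mb] using this
  refine ⟨g '' Bset, hBinf.image (hginj.injOn), ?_, ?_⟩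
  · rintro M ⟨b, hb, rfl⟩
    obtain ⟨hbr, hbne⟩ := hb
    have hb1 : b ≠ 1 := by simp at hbne; tauto
    have hb2 : c - 2 - b ≠ 1 := by
      intro h
      apply hbne
      simp only [Set.mem_insert_iff, Set.mem_singleton_iff]
      right
      linear_combination -h
    refine ⟨isUnit_Mb b _ hb1 hb2, ?_⟩
    rw [hg]
    rw [trace_cosquare b _ hb1 hb2]
    ring
  · rintro M ⟨b, hb, rfl⟩ N ⟨b', hb', rfl⟩ hne hcong
    obtain ⟨hbr, hbne⟩ := hb
    obtain ⟨hbr', hbne'⟩ := hb'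
    have hb1 : b ≠ 1 := by simp at hbne; tauto
    have hb2 : c - 2 - b ≠ 1 := by
      intro h; apply hbne
      simp only [Set.mem_insert_iff, Set.mem_singleton_iff]; right; linear_combination -h
    have hb1' : b' ≠ 1 := by simp at hbne'; tauto
    have hb2' : c - 2 - b' ≠ 1 := by
      intro h; apply hbne'
      simp only [Set.mem_insert_iff, Set.mem_singleton_iff]; right; linear_combination -h
    have htr := trace_sq_congr hcong
    rw [hg] at htr
    rw [trace_sq_cosquare b _ hb1 hb2, trace_sq_cosquare b' _ hb1' hb2'] at htr
    -- extract n, m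
    obtain ⟨n, hn⟩ := hbr
    obtain ⟨m, hm⟩ := hbr'
    rw [hf] at hn hm
    simp only at hn hm
    subst hn
    -- htr becomes equation in n, m
    have hb'' : b' = c / 2 + m := hm.symm
    subst hb''
    have heq : ((n : ℂ) + 1) ^ 2 = ((m : ℂ) + 1) ^ 2 := by linear_combination htr / 2
    have heqn : ((n + 1) ^ 2 : ℕ) = ((m + 1) ^ 2 : ℕ) := by exact_mod_cast heq
    have : n = m := by
      have h1 : n + 1 = m + 1 := Nat.pow_left_injective (by norm_num) heqn
      omega
    exact hne (by rw [this])
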